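/- Let A be a hyperbolic linear automorphism of ℝ^N with splitting ℝ^N = E^s ⊕ E^u as above, and let (y_k)_{k ∈ ℤ} be a sequence in ℝ^N such that b_k := y_{k+1} − A y_k is uniformly bounded. Then there exists a unique z ∈ ℝ^N such that the sequence (y_k − A^k z)_{k ∈ ℤ} is bounded; explicitly, z = z^u + z^s where z^u = lim_{k→∞} (A^{−k} y_k)^u and z^s = lim_{k→∞} (A^k y_{−k})^s (with v = v^s + v^u the splitting of v along E^s ⊕ E^u). -/

import Mathlib

open Filter

/-- Global shadowing lemma for hyperbolic linear automorphisms of ℝ^N: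
every pseudo-orbit with bounded errors is shadowed by a unique genuine orbit, whose
initial point is given explicitly by the stable/unstable limit formulas. -/
theorem hyperbolic_shadowing {N : ℕ}
    (A : (Fin N → ℝ) ≃ₗ[ℝ] (Fin N → ℝ))
    (Es Eu : Submodule ℝ (Fin N → ℝ))
    (hcompl : IsCompl Es Eu)
    (hAs : ∀ z ∈ Es, A z ∈ Es) (hAu : ∀ z ∈ Eu, A z ∈ Eu)
    (πs πu : (Fin N → ℝ) →ₗ[ℝ] (Fin N → ℝ))
    (hπs : ∀ v, πs v ∈ Es) (hπu : ∀ v, πu v ∈ Eu)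
    (hsplit : ∀ v, πs v + πu v = v)
    (C η : ℝ) (hC : 0 < C) (hη0 : 0 < η) (hη1 : η < 1)
    (hs : ∀ z ∈ Es, ∀ k : ℕ, ‖(A ^ k : (Fin N → ℝ) ≃ₗ[ℝ] (Fin N → ℝ)) z‖ ≤ C * η ^ k * ‖z‖)
    (hu : ∀ z ∈ Eu, ∀ k : ℕ, ‖(A ^ (-(k : ℤ)) : (Fin N → ℝ) ≃ₗ[ℝ] (Fin N → ℝ)) z‖ ≤ C * η ^ k * ‖z‖)
    (y : ℤ → Fin N → ℝ)
    (hb : ∃ B : ℝ, ∀ k : ℤ, ‖y (k + 1) - A (y k)‖ ≤ B) :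
    ∃ zu zs : Fin N → ℝ,
      Filter.Tendsto (fun k : ℕ =>
          πu ((A ^ (-(k : ℤ)) : (Fin N → ℝ) ≃ₗ[ℝ] (Fin N → ℝ)) (y (k : ℤ))))
        Filter.atTop (nhds zu) ∧
      Filter.Tendsto (fun k : ℕ =>
          πs ((A ^ (k : ℤ) : (Fin N → ℝ) ≃ₗ[ℝ] (Fin N → ℝ)) (y (-(k : ℤ)))))
        Filter.atTop (nhds zs) ∧
      ∀ z : Fin N → ℝ,
        Bornology.IsBounded
          (Set.range fun k : ℤ => y k - (A ^ k : (Fin N → ℝ) ≃ₗ[ℝ] (Fin N → ℝ)) z)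
        ↔ z = zu + zs := by
  classical
  obtain ⟨B, hB⟩ := hb
  have hB0 : 0 ≤ B := le_trans (norm_nonneg _) (hB 0)
  -- application of products of powers
  have mulapp : ∀ (m n : ℤ) (v : Fin N → ℝ), (A ^ (m + n)) v = (A ^ m) ((A ^ n) v) := by
    intro m n v; rw [zpow_add]; rfl
  -- basic projection identities
  have hπs0 : ∀ w ∈ Eu, πs w = 0 := by
    intro w hw
    refine (Submodule.disjoint_def.mp hcompl.disjoint) (πs w) (hπs w) ?_
    have h2 : πs w = w - πu w := eq_sub_of_add_eq (hsplit w)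
    rw [h2]; exact Submodule.sub_mem _ hw (hπu w)
  have hπu0 : ∀ w ∈ Es, πu w = 0 := by
    intro w hw
    refine (Submodule.disjoint_def.mp hcompl.disjoint) (πu w) ?_ (hπu w)
    have h2 : πu w = w - πs w := eq_sub_of_add_eq' (hsplit w)
    rw [h2]; exact Submodule.sub_mem _ hw (hπs w)
  have hπsid : ∀ w ∈ Es, πs w = w := by
    intro w hw; have := hsplit w; rw [hπu0 w hw, add_zero] at this; exact this
  have hπuid : ∀ w ∈ Eu, πu w = w := by
    intro w hw; have := hsplit w; rw [hπs0 w hw, zero_add] at this; exact this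
  -- invariance under the inverse
  have hAs' : ∀ z ∈ Es, A.symm z ∈ Es := by
    have hmap : Submodule.map (A : (Fin N → ℝ) →ₗ[ℝ] (Fin N → ℝ)) Es = Es := by
      apply Submodule.eq_of_le_of_finrank_le
      · rintro x ⟨w, hw, rfl⟩; exact hAs w hw
      · rw [LinearEquiv.finrank_map_eq]
    intro z hz
    rw [← hmap] at hz
    obtain ⟨w, hw, rfl⟩ := hz
    simpa using hw
  have hAu' : ∀ z ∈ Eu, A.symm z ∈ Eu := by
    have hmap : Submodule.map (A : (Fin N → ℝ) →ₗ[ℝ] (Fin N → ℝ)) Eu = Eu := by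
      apply Submodule.eq_of_le_of_finrank_le
      · rintro x ⟨w, hw, rfl⟩; exact hAu w hw
      · rw [LinearEquiv.finrank_map_eq]
    intro z hz
    rw [← hmap] at hz
    obtain ⟨w, hw, rfl⟩ := hz
    simpa using hw
  -- invariance under all integer powers
  have hEsZ : ∀ n : ℤ, ∀ z ∈ Es, (A ^ n) z ∈ Es := by
    intro n
    induction n using Int.induction_on with
    | zero => intro z hz; simpa using hz
    | succ k ih =>
        intro z hz
        rw [show ((k : ℤ) + 1) = 1 + k by ring, mulapp, zpow_one]
        exact hAs _ (ih z hz)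
    | pred k ih =>
        intro z hz
        rw [show (-(k : ℤ) - 1) = (-1) + (-k) by ring, mulapp, zpow_neg_one]
        exact hAs' _ (ih z hz)
  have hEuZ : ∀ n : ℤ, ∀ z ∈ Eu, (A ^ n) z ∈ Eu := by
    intro n
    induction n using Int.induction_on with
    | zero => intro z hz; simpa using hz
    | succ k ih =>
        intro z hz
        rw [show ((k : ℤ) + 1) = 1 + k by ring, mulapp, zpow_one]
        exact hAu _ (ih z hz)
    | pred k ih =>
        intro z hz
        rw [show (-(k : ℤ) - 1) = (-1) + (-k) by ring, mulapp, zpow_neg_one]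
        exact hAu' _ (ih z hz)
  -- projections commute with all integer powers of A
  have hπuZ : ∀ (n : ℤ) (v : Fin N → ℝ), πu ((A ^ n) v) = (A ^ n) (πu v) := by
    intro n v
    have h1 : (A ^ n) v = (A ^ n) (πs v) + (A ^ n) (πu v) := by
      rw [← map_add, hsplit]
    rw [h1, map_add, hπu0 _ (hEsZ n _ (hπs v)), hπuid _ (hEuZ n _ (hπu v)), zero_add]
  have hπsZ : ∀ (n : ℤ) (v : Fin N → ℝ), πs ((A ^ n) v) = (A ^ n) (πs v) := by
    intro n v
    have h1 : (A ^ n) v = (A ^ n) (πs v) + (A ^ n) (πu v) := by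
      rw [← map_add, hsplit]
    rw [h1, map_add, hπsid _ (hEsZ n _ (hπs v)), hπs0 _ (hEuZ n _ (hπu v)), add_zero]
  -- operator norm bounds for the projections
  obtain ⟨Mu, hMu0, hMu⟩ : ∃ M : ℝ, 0 ≤ M ∧ ∀ v, ‖πu v‖ ≤ M * ‖v‖ :=
    ⟨‖LinearMap.toContinuousLinearMap πu‖, norm_nonneg _, fun v => by
      simpa using (LinearMap.toContinuousLinearMap πu).le_opNorm v⟩
  obtain ⟨Ms, hMs0, hMs⟩ : ∃ M : ℝ, 0 ≤ M ∧ ∀ v, ‖πs v‖ ≤ M * ‖v‖ :=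
    ⟨‖LinearMap.toContinuousLinearMap πs‖, norm_nonneg _, fun v => by
      simpa using (LinearMap.toContinuousLinearMap πs).le_opNorm v⟩
  -- continuity of the powers
  have hcont : ∀ n : ℤ, Continuous fun v => (A ^ n) v := fun n =>
    LinearMap.continuous_of_finiteDimensional
      ((A ^ n : (Fin N → ℝ) ≃ₗ[ℝ] (Fin N → ℝ)) : (Fin N → ℝ) →ₗ[ℝ] (Fin N → ℝ))
  have shift1 : ∀ (n : ℤ) (v : Fin N → ℝ), (A ^ n) v = (A ^ (n - 1)) (A v) := by
    intro n v
    have h := mulapp (n - 1) 1 v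
    rw [show n - 1 + 1 = n by ring] at h
    rw [h, zpow_one]
  -- the two key step estimates
  have hub : ∀ (j : ℤ) (m : ℕ),
      ‖(A ^ (-(m : ℤ) - 1)) (πu (y (j + 1) - A (y j)))‖ ≤ C * η ^ (m + 1) * (Mu * B) := by
    intro j m
    have h1 := hu (πu (y (j + 1) - A (y j))) (hπu _) (m + 1)
    rw [show -((m + 1 : ℕ) : ℤ) = -(m : ℤ) - 1 by push_cast; ring] at h1
    refine h1.trans ?_
    have h2 : ‖πu (y (j + 1) - A (y j))‖ ≤ Mu * B :=
      (hMu _).trans (mul_le_mul_of_nonneg_left (hB j) hMu0)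
    have h3 : (0 : ℝ) ≤ C * η ^ (m + 1) := by positivity
    exact mul_le_mul_of_nonneg_left h2 h3
  have hsb : ∀ (j : ℤ) (m : ℕ),
      ‖(A ^ (m : ℤ)) (πs (y (j + 1) - A (y j)))‖ ≤ C * η ^ m * (Ms * B) := by
    intro j m
    have h1 := hs (πs (y (j + 1) - A (y j))) (hπs _) m
    rw [← zpow_natCast A m] at h1
    refine h1.trans ?_
    have h2 : ‖πs (y (j + 1) - A (y j))‖ ≤ Ms * B :=
      (hMs _).trans (mul_le_mul_of_nonneg_left (hB j) hMs0)
    have h3 : (0 : ℝ) ≤ C * η ^ m := by positivity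
    exact mul_le_mul_of_nonneg_left h2 h3
  -- the unstable sequence converges
  set gu : ℕ → (Fin N → ℝ) := fun k => πu ((A ^ (-(k : ℤ))) (y (k : ℤ))) with hgu
  have hgustep : ∀ k : ℕ,
      gu (k + 1) - gu k = (A ^ (-(k : ℤ) - 1)) (πu (y ((k : ℤ) + 1) - A (y (k : ℤ)))) := by
    intro k
    simp only [hgu]
    push_cast
    rw [show -((k : ℤ) + 1) = -(k : ℤ) - 1 by ring]
    rw [shift1 (-(k : ℤ)) (y (k : ℤ))]
    rw [← map_sub πu, ← map_sub (A ^ (-(k : ℤ) - 1)), hπuZ]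
  have hcauu : CauchySeq gu := by
    apply cauchySeq_of_le_geometric η (C * η * (Mu * B)) hη1
    intro n
    rw [dist_comm, dist_eq_norm, hgustep n]
    calc ‖(A ^ (-(n : ℤ) - 1)) (πu (y ((n : ℤ) + 1) - A (y (n : ℤ))))‖
        ≤ C * η ^ (n + 1) * (Mu * B) := hub n n
      _ = C * η * (Mu * B) * η ^ n := by ring
  obtain ⟨zu, hzu⟩ := cauchySeq_tendsto_of_complete hcauu
  -- the stable sequence converges
  set gs : ℕ → (Fin N → ℝ) := fun k => πs ((A ^ (k : ℤ)) (y (-(k : ℤ)))) with hgs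
  have hgsstep : ∀ k : ℕ,
      gs k - gs (k + 1) = (A ^ (k : ℤ)) (πs (y ((-(k : ℤ) - 1) + 1) - A (y (-(k : ℤ) - 1)))) := by
    intro k
    simp only [hgs]
    push_cast
    rw [show -((k : ℤ) + 1) = -(k : ℤ) - 1 by ring]
    rw [shift1 ((k : ℤ) + 1) (y (-(k : ℤ) - 1)), show (k : ℤ) + 1 - 1 = (k : ℤ) by ring]
    rw [show y (-(k : ℤ)) = y ((-(k : ℤ) - 1) + 1) by norm_num]
    rw [← map_sub πs, ← map_sub (A ^ (k : ℤ)), hπsZ]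
  have hcaus : CauchySeq gs := by
    apply cauchySeq_of_le_geometric η (C * (Ms * B)) hη1
    intro n
    rw [dist_eq_norm, hgsstep n]
    calc ‖(A ^ (n : ℤ)) (πs (y ((-(n : ℤ) - 1) + 1) - A (y (-(n : ℤ) - 1))))‖
        ≤ C * η ^ n * (Ms * B) := hsb (-(n : ℤ) - 1) n
      _ = C * (Ms * B) * η ^ n := by ring
  obtain ⟨zs, hzs⟩ := cauchySeq_tendsto_of_complete hcaus
  have hzuEu : zu ∈ Eu :=
    (Submodule.closed_of_finiteDimensional Eu).mem_of_tendsto hzu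
      (Eventually.of_forall fun k => hπu _)
  have hzsEs : zs ∈ Es :=
    (Submodule.closed_of_finiteDimensional Es).mem_of_tendsto hzs
      (Eventually.of_forall fun k => hπs _)
  have hπuzu : πu (zu + zs) = zu := by
    rw [map_add, hπuid zu hzuEu, hπu0 zs hzsEs, add_zero]
  have hπszs : πs (zu + zs) = zs := by
    rw [map_add, hπs0 zu hzuEu, hπsid zs hzsEs, zero_add]
  refine ⟨zu, zs, hzu, hzs, fun z => ⟨?_, ?_⟩⟩
  · -- boundedness forces z = zu + zs
    intro hbnd
    rw [isBounded_iff_forall_norm_le] at hbnd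
    obtain ⟨R, hR⟩ := hbnd
    have hRk : ∀ k : ℤ, ‖y k - (A ^ k) z‖ ≤ R := fun k => hR _ ⟨k, rfl⟩
    have hR0 : 0 ≤ R := le_trans (norm_nonneg _) (hRk 0)
    -- πu z = zu
    have h1 : Tendsto gu atTop (nhds (πu z)) := by
      rw [← tendsto_sub_nhds_zero_iff]
      refine squeeze_zero_norm (a := fun k : ℕ => C * (Mu * R) * η ^ k) ?_ ?_
      · intro k
        have ez : (A ^ (-(k : ℤ))) ((A ^ (k : ℤ)) z) = z := by
          rw [← mulapp, show -(k : ℤ) + k = 0 by ring, zpow_zero]; rfl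
        have e : gu k - πu z = (A ^ (-(k : ℤ))) (πu (y (k : ℤ) - (A ^ (k : ℤ)) z)) := by
          rw [← hπuZ, map_sub (A ^ (-(k : ℤ))), ez, map_sub]
        rw [e]
        have h2 := hu (πu (y (k : ℤ) - (A ^ (k : ℤ)) z)) (hπu _) k
        refine h2.trans ?_
        have h3 : ‖πu (y (k : ℤ) - (A ^ (k : ℤ)) z)‖ ≤ Mu * R :=
          (hMu _).trans (mul_le_mul_of_nonneg_left (hRk k) hMu0)
        calc C * η ^ k * ‖πu (y (k : ℤ) - (A ^ (k : ℤ)) z)‖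
            ≤ C * η ^ k * (Mu * R) :=
              mul_le_mul_of_nonneg_left h3 (by positivity)
          _ = C * (Mu * R) * η ^ k := by ring
      · simpa using (tendsto_pow_atTop_nhds_zero_of_lt_one hη0.le hη1).const_mul (C * (Mu * R))
    have hπuz : πu z = zu := tendsto_nhds_unique h1 hzu
    -- πs z = zs
    have h4 : Tendsto gs atTop (nhds (πs z)) := by
      rw [← tendsto_sub_nhds_zero_iff]
      refine squeeze_zero_norm (a := fun k : ℕ => C * (Ms * R) * η ^ k) ?_ ?_
      · intro k
        have ez : (A ^ (k : ℤ)) ((A ^ (-(k : ℤ))) z) = z := by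
          rw [← mulapp, show (k : ℤ) + -k = 0 by ring, zpow_zero]; rfl
        have e : gs k - πs z = (A ^ (k : ℤ)) (πs (y (-(k : ℤ)) - (A ^ (-(k : ℤ))) z)) := by
          rw [← hπsZ, map_sub (A ^ (k : ℤ)), ez, map_sub]
        rw [e]
        have h2 := hs (πs (y (-(k : ℤ)) - (A ^ (-(k : ℤ))) z)) (hπs _) k
        rw [← zpow_natCast A k] at h2
        refine h2.trans ?_
        have h3 : ‖πs (y (-(k : ℤ)) - (A ^ (-(k : ℤ))) z)‖ ≤ Ms * R :=
          (hMs _).trans (mul_le_mul_of_nonneg_left (hRk _) hMs0)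
        calc C * η ^ k * ‖πs (y (-(k : ℤ)) - (A ^ (-(k : ℤ))) z)‖
            ≤ C * η ^ k * (Ms * R) :=
              mul_le_mul_of_nonneg_left h3 (by positivity)
          _ = C * (Ms * R) * η ^ k := by ring
      · simpa using (tendsto_pow_atTop_nhds_zero_of_lt_one hη0.le hη1).const_mul (C * (Ms * R))
    have hπsz : πs z = zs := tendsto_nhds_unique h4 hzs
    rw [← hsplit z, hπuz, hπsz, add_comm]
  · -- z = zu + zs gives a bounded shadowing orbit
    intro hz
    subst hz
    rw [isBounded_iff_forall_norm_le]
    refine ⟨C * (Ms * B) / (1 - η) + C * η * (Mu * B) / (1 - η), ?_⟩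
    rintro x ⟨k, rfl⟩
    -- unstable estimate
    have hUk : ‖πu (y k - (A ^ k) (zu + zs))‖ ≤ C * η * (Mu * B) / (1 - η) := by
      set f : ℕ → (Fin N → ℝ) :=
        fun m => (A ^ (k : ℤ)) (πu ((A ^ (-(k + (m : ℤ)))) (y (k + (m : ℤ))))) with hf
      have hd : ∀ m : ℕ, dist (f m) (f (m + 1)) ≤ (C * η * (Mu * B)) * η ^ m := by
        intro m
        rw [dist_comm, dist_eq_norm]
        have e : f (m + 1) - f m
            = (A ^ (-(m : ℤ) - 1)) (πu (y ((k + (m : ℤ)) + 1) - A (y (k + (m : ℤ))))) := by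
          simp only [hf]
          push_cast
          rw [show -(k + ((m : ℤ) + 1)) = -(k + (m : ℤ)) - 1 by ring]
          rw [show k + ((m : ℤ) + 1) = (k + (m : ℤ)) + 1 by ring]
          rw [shift1 (-(k + (m : ℤ))) (y (k + (m : ℤ)))]
          rw [← map_sub (A ^ (k : ℤ)), ← map_sub πu, ← map_sub (A ^ (-(k + (m : ℤ)) - 1)),
            hπuZ, ← mulapp]
          rw [show k + (-(k + (m : ℤ)) - 1) = -(m : ℤ) - 1 by ring]
        rw [e]
        calc ‖(A ^ (-(m : ℤ) - 1)) (πu (y ((k + (m : ℤ)) + 1) - A (y (k + (m : ℤ)))))‖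
            ≤ C * η ^ (m + 1) * (Mu * B) := hub (k + (m : ℤ)) m
          _ = (C * η * (Mu * B)) * η ^ m := by ring
      have hin : Tendsto (fun m : ℕ => πu ((A ^ (-(k + (m : ℤ)))) (y (k + (m : ℤ)))))
          atTop (nhds zu) := by
        have hc : Tendsto (fun m : ℕ => (k + (m : ℤ)).toNat) atTop atTop :=
          tendsto_atTop_atTop.mpr fun b => ⟨b + (-k).toNat, fun m hm => by omega⟩
        refine (hzu.comp hc).congr' ?_
        filter_upwards [eventually_ge_atTop (-k).toNat] with m hm
        have hmk : (((k + (m : ℤ)).toNat : ℕ) : ℤ) = k + (m : ℤ) := by omega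
        simp only [Function.comp, hgu]
        rw [hmk]
      have hft : Tendsto f atTop (nhds ((A ^ (k : ℤ)) zu)) :=
        ((hcont (k : ℤ)).tendsto zu).comp hin
      have h0 := dist_le_of_le_geometric_of_tendsto₀ η (C * η * (Mu * B)) hη1 hd hft
      have hf0 : f 0 = πu (y k) := by
        simp only [hf, Nat.cast_zero, add_zero]
        rw [← hπuZ, ← mulapp, show (k : ℤ) + -k = 0 by ring, zpow_zero]
        rfl
      have e2 : πu (y k - (A ^ k) (zu + zs)) = f 0 - (A ^ (k : ℤ)) zu := by
        rw [map_sub, hπuZ, hπuzu, hf0]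
      rw [e2, ← dist_eq_norm]
      exact h0
    -- stable estimate
    have hSk : ‖πs (y k - (A ^ k) (zu + zs))‖ ≤ C * (Ms * B) / (1 - η) := by
      set f : ℕ → (Fin N → ℝ) :=
        fun m => (A ^ (k : ℤ)) (πs ((A ^ (-(k - (m : ℤ)))) (y (k - (m : ℤ))))) with hf
      have hd : ∀ m : ℕ, dist (f m) (f (m + 1)) ≤ (C * (Ms * B)) * η ^ m := by
        intro m
        rw [dist_eq_norm]
        have e : f m - f (m + 1)
            = (A ^ (m : ℤ)) (πs (y (k - (m : ℤ) - 1 + 1) - A (y (k - (m : ℤ) - 1)))) := by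
          simp only [hf]
          push_cast
          rw [show k - ((m : ℤ) + 1) = k - (m : ℤ) - 1 by ring]
          have h5 : (A ^ (-(k - (m : ℤ) - 1))) (y (k - (m : ℤ) - 1))
              = (A ^ (-(k - (m : ℤ)))) (A (y (k - (m : ℤ) - 1))) := by
            rw [show -(k - (m : ℤ) - 1) = -(k - (m : ℤ)) + 1 by ring, mulapp, zpow_one]
          rw [h5, show y (k - (m : ℤ)) = y (k - (m : ℤ) - 1 + 1) from congrArg y (by ring)]
          rw [← map_sub (A ^ (k : ℤ)), ← map_sub πs, ← map_sub (A ^ (-(k - (m : ℤ)))),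
            hπsZ, ← mulapp]
          rw [show k + -(k - (m : ℤ)) = (m : ℤ) by ring]
        rw [e]
        calc ‖(A ^ (m : ℤ)) (πs (y (k - (m : ℤ) - 1 + 1) - A (y (k - (m : ℤ) - 1))))‖
            ≤ C * η ^ m * (Ms * B) := hsb (k - (m : ℤ) - 1) m
          _ = (C * (Ms * B)) * η ^ m := by ring
      have hin : Tendsto (fun m : ℕ => πs ((A ^ (-(k - (m : ℤ)))) (y (k - (m : ℤ)))))
          atTop (nhds zs) := by
        have hc : Tendsto (fun m : ℕ => ((m : ℤ) - k).toNat) atTop atTop :=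
          tendsto_atTop_atTop.mpr fun b => ⟨b + k.toNat, fun m hm => by omega⟩
        refine (hzs.comp hc).congr' ?_
        filter_upwards [eventually_ge_atTop k.toNat] with m hm
        have hmk : ((((m : ℤ) - k).toNat : ℕ) : ℤ) = (m : ℤ) - k := by omega
        simp only [Function.comp, hgs]
        rw [hmk, show (m : ℤ) - k = -(k - (m : ℤ)) by ring,
          show -(-(k - (m : ℤ))) = k - (m : ℤ) by ring]
      have hft : Tendsto f atTop (nhds ((A ^ (k : ℤ)) zs)) :=
        ((hcont (k : ℤ)).tendsto zs).comp hin
      have h0 := dist_le_of_le_geometric_of_tendsto₀ η (C * (Ms * B)) hη1 hd hft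
      have hf0 : f 0 = πs (y k) := by
        simp only [hf, Nat.cast_zero, sub_zero]
        rw [← hπsZ, ← mulapp, show (k : ℤ) + -k = 0 by ring, zpow_zero]
        rfl
      have e2 : πs (y k - (A ^ k) (zu + zs)) = f 0 - (A ^ (k : ℤ)) zs := by
        rw [map_sub, hπsZ, hπszs, hf0]
      rw [e2, ← dist_eq_norm]
      exact h0
    have hdec : y k - (A ^ k) (zu + zs)
        = πs (y k - (A ^ k) (zu + zs)) + πu (y k - (A ^ k) (zu + zs)) := (hsplit _).symm
    calc ‖y k - (A ^ k) (zu + zs)‖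
        = ‖πs (y k - (A ^ k) (zu + zs)) + πu (y k - (A ^ k) (zu + zs))‖ := by rw [← hdec]
      _ ≤ ‖πs (y k - (A ^ k) (zu + zs))‖ + ‖πu (y k - (A ^ k) (zu + zs))‖ := norm_add_le _ _
      _ ≤ C * (Ms * B) / (1 - η) + C * η * (Mu * B) / (1 - η) := add_le_add hSk hUk
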